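/- For transition relations between tau-stable equivalence-class representatives: let P be a strongly guarded process, [P] its concrete-branching-reactive-bisimilarity equivalence class considered as a state with the class transition relation. Then for all α ∈ A ∪ {tau}: [P] -α-> R' iff there exists a path P ==> P1 -α-> P2 with P1 ∈ [P], P2 ∈ R', and (α ∈ A or [P] ≠ R'). Moreover [P] has no tau-transition iff there is a path P ==> P0 with P0 ∈ [P] and P0 having no tau-transition. -/

import Mathlib

inductive Act (A : Type) where
  | vis (a : A)
  | tau
  | to

def TauPath {S A : Type} (Tr : S → Act A → S → Prop) : S → S → Prop :=
  Relation.ReflTransGen (fun p q => Tr p Act.tau q)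

def OptStep {S A : Type} (Tr : S → Act A → S → Prop) (α : Act A) (p q : S) : Prop :=
  (α = Act.tau ∧ p = q) ∨ Tr p α q

def Stable {S A : Type} (Tr : S → Act A → S → Prop) (p : S) : Prop :=
  ¬ ∃ p', Tr p Act.tau p'

def Idle {S A : Type} (Tr : S → Act A → S → Prop) (p : S) (X : Set A) : Prop :=
  Stable Tr p ∧ ∀ a ∈ X, ¬ ∃ p', Tr p (Act.vis a) p'

def InitSet {S A : Type} (Tr : S → Act A → S → Prop) (p : S) : Set (Act A) :=
  {α | α ≠ Act.to ∧ ∃ p', Tr p α p'}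

structure CBRB {S A : Type} (Tr : S → Act A → S → Prop)
    (Rp : S → S → Prop) (Rt : S → Set A → S → Prop) : Prop where
  symm_p : ∀ {P Q}, Rp P Q → Rp Q P
  symm_t : ∀ {P X Q}, Rt P X Q → Rt Q X P
  c1a : ∀ {P Q α P'}, Rp P Q → α ≠ Act.to → Tr P α P' →
    ∃ Q1 Q2, TauPath Tr Q Q1 ∧ OptStep Tr α Q1 Q2 ∧ Rp P Q1 ∧ Rp P' Q2
  c1b : ∀ {P Q} (Y : Set A), Rp P Q → Rt P Y Q
  c2a : ∀ {P X Q P'}, Rt P X Q → Tr P Act.tau P' →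
    ∃ Q1 Q2, TauPath Tr Q Q1 ∧ OptStep Tr Act.tau Q1 Q2 ∧ Rt P X Q1 ∧ Rt P' X Q2
  c2b : ∀ {P X Q a P'}, Rt P X Q → a ∈ X → Tr P (Act.vis a) P' →
    ∃ Q1 Q2, TauPath Tr Q Q1 ∧ Tr Q1 (Act.vis a) Q2 ∧ Rt P X Q1 ∧ Rp P' Q2
  c2c : ∀ {P X Q}, Rt P X Q → Idle Tr P X → ∃ Q0, TauPath Tr Q Q0 ∧ Rp P Q0
  c2d : ∀ {P X Q P'}, Rt P X Q → Idle Tr P X → Tr P Act.to P' →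
    ∃ Q1 Q2, TauPath Tr Q Q1 ∧ Tr Q1 Act.to Q2 ∧ Rt P' X Q2
  c2e : ∀ {P X Q}, Rt P X Q → Stable Tr P → ∃ Q0, TauPath Tr Q Q0 ∧ Stable Tr Q0

def Bis {S A : Type} (Tr : S → Act A → S → Prop) (P Q : S) : Prop :=
  ∃ Rp Rt, CBRB Tr Rp Rt ∧ Rp P Q

def BisX {S A : Type} (Tr : S → Act A → S → Prop) (P : S) (X : Set A) (Q : S) : Prop :=
  ∃ Rp Rt, CBRB Tr Rp Rt ∧ Rt P X Q

/-- Strong guardedness: no infinite sequences of tau-transitions. -/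
def StronglyGuarded {C A : Type} (Tr : C → Act A → C → Prop) : Prop :=
  ¬ ∃ f : ℕ → C, ∀ n, Tr (f n) Act.tau (f (n + 1))

/-- The equivalence class of `P` under concrete branching reactive bisimilarity. -/
def cls {C A : Type} (Tr : C → Act A → C → Prop) (P : C) : Set C :=
  {Q | Bis Tr P Q}

/-- `R` is a `~`-equivalence class. -/
def IsClass {C A : Type} (Tr : C → Act A → C → Prop) (R : Set C) : Prop :=
  ∃ P, R = cls Tr P

/-- The transition relation between equivalence classes, relative to a choice
function `χ` of representatives. -/
def ClTr {C A : Type} (Tr : C → Act A → C → Prop) (χ : Set C → C)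
    (R : Set C) (α : Act A) (R' : Set C) : Prop :=
  match α with
  | Act.to =>
      ∃ P1 P2, TauPath Tr (χ R) P1 ∧ Tr P1 Act.to P2 ∧ P1 ∈ R ∧ Stable Tr P1 ∧ P2 ∈ R'
  | _ =>
      ∃ P1 P2, TauPath Tr (χ R) P1 ∧ Tr P1 α P2 ∧ P1 ∈ R ∧ P2 ∈ R' ∧
        ((∃ a, α = Act.vis a) ∨ R ≠ R')

section Helpers
variable {C A : Type} {Tr : C → Act A → C → Prop}

lemma bis_refl (P : C) : Bis Tr P P := by
  refine ⟨Eq, fun p _ q => p = q, ?_, rfl⟩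
  constructor
  · exact fun h => h.symm
  · exact fun h => h.symm
  · rintro P Q α P' rfl _ h
    exact ⟨P, P', Relation.ReflTransGen.refl, Or.inr h, rfl, rfl⟩
  · rintro P Q Y rfl; rfl
  · rintro P X Q P' rfl h
    exact ⟨P, P', Relation.ReflTransGen.refl, Or.inr h, rfl, rfl⟩
  · rintro P X Q a P' rfl _ h
    exact ⟨P, P', Relation.ReflTransGen.refl, h, rfl, rfl⟩
  · rintro P X Q rfl _; exact ⟨P, Relation.ReflTransGen.refl, rfl⟩
  · rintro P X Q P' rfl _ h
    exact ⟨P, P', Relation.ReflTransGen.refl, h, rfl⟩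
  · rintro P X Q rfl h; exact ⟨P, Relation.ReflTransGen.refl, h⟩

lemma bis_symm {P Q : C} (h : Bis Tr P Q) : Bis Tr Q P := by
  obtain ⟨Rp, Rt, hc, hpq⟩ := h
  exact ⟨Rp, Rt, hc, hc.symm_p hpq⟩

lemma master : CBRB Tr (Bis Tr) (BisX Tr) := by
  constructor
  · exact fun h => bis_symm h
  · rintro P X Q ⟨Rp, Rt, hc, h⟩; exact ⟨Rp, Rt, hc, hc.symm_t h⟩
  · rintro P Q α P' ⟨Rp, Rt, hc, h⟩ hα hstep
    obtain ⟨Q1, Q2, h1, h2, h3, h4⟩ := hc.c1a h hα hstep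
    exact ⟨Q1, Q2, h1, h2, ⟨Rp, Rt, hc, h3⟩, ⟨Rp, Rt, hc, h4⟩⟩
  · rintro P Q Y ⟨Rp, Rt, hc, h⟩; exact ⟨Rp, Rt, hc, hc.c1b Y h⟩
  · rintro P X Q P' ⟨Rp, Rt, hc, h⟩ hstep
    obtain ⟨Q1, Q2, h1, h2, h3, h4⟩ := hc.c2a h hstep
    exact ⟨Q1, Q2, h1, h2, ⟨Rp, Rt, hc, h3⟩, ⟨Rp, Rt, hc, h4⟩⟩
  · rintro P X Q a P' ⟨Rp, Rt, hc, h⟩ ha hstep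
    obtain ⟨Q1, Q2, h1, h2, h3, h4⟩ := hc.c2b h ha hstep
    exact ⟨Q1, Q2, h1, h2, ⟨Rp, Rt, hc, h3⟩, ⟨Rp, Rt, hc, h4⟩⟩
  · rintro P X Q ⟨Rp, Rt, hc, h⟩ hid
    obtain ⟨Q0, h1, h2⟩ := hc.c2c h hid
    exact ⟨Q0, h1, ⟨Rp, Rt, hc, h2⟩⟩
  · rintro P X Q P' ⟨Rp, Rt, hc, h⟩ hid hstep
    obtain ⟨Q1, Q2, h1, h2, h3⟩ := hc.c2d h hid hstep
    exact ⟨Q1, Q2, h1, h2, ⟨Rp, Rt, hc, h3⟩⟩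
  · rintro P X Q ⟨Rp, Rt, hc, h⟩ hs
    exact hc.c2e h hs

lemma optStep_tauPath {α : Act A} {p q : C} (h : OptStep Tr α p q) (hα : α = Act.tau) :
    TauPath Tr p q := by
  rcases h with ⟨_, rfl⟩ | h
  · exact Relation.ReflTransGen.refl
  · subst hα; exact Relation.ReflTransGen.single h

lemma tauPath_sim {M Q M1 : C} (h : Bis Tr M Q) (hp : TauPath Tr M M1) :
    ∃ Q1, TauPath Tr Q Q1 ∧ Bis Tr M1 Q1 := by
  induction hp with
  | refl => exact ⟨Q, Relation.ReflTransGen.refl, h⟩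
  | tail _ hbc ih =>
    obtain ⟨Q1, hQ1, hb⟩ := ih
    obtain ⟨Qa, Qb, h1, h2, _, h4⟩ := master.c1a hb (by simp) hbc
    exact ⟨Qb, hQ1.trans (h1.trans (optStep_tauPath h2 rfl)), h4⟩

lemma tauPath_simX {M Q M1 : C} {X : Set A} (h : BisX Tr M X Q) (hp : TauPath Tr M M1) :
    ∃ Q1, TauPath Tr Q Q1 ∧ BisX Tr M1 X Q1 := by
  induction hp with
  | refl => exact ⟨Q, Relation.ReflTransGen.refl, h⟩
  | tail _ hbc ih =>
    obtain ⟨Q1, hQ1, hb⟩ := ih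
    obtain ⟨Qa, Qb, h1, h2, _, h4⟩ := master.c2a hb hbc
    exact ⟨Qb, hQ1.trans (h1.trans (optStep_tauPath h2 rfl)), h4⟩

lemma wf_tau (hsg : StronglyGuarded Tr) : WellFounded (fun b c : C => Tr c Act.tau b) := by
  classical
  set r : C → C → Prop := fun b c => Tr c Act.tau b with hr
  by_contra hwf
  have hex : ∃ a, ¬ Acc r a := by
    by_contra h; push_neg at h; exact hwf ⟨h⟩
  have step : ∀ a, ¬ Acc r a → ∃ b, r b a ∧ ¬ Acc r b := by
    intro a ha
    by_contra h; push_neg at h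
    exact ha (Acc.intro a fun b hb => h b hb)
  obtain ⟨a0, ha0⟩ := hex
  obtain ⟨next, hnext⟩ : ∃ next : {a : C // ¬ Acc r a} → {a : C // ¬ Acc r a},
      ∀ x, r (next x).1 x.1 :=
    ⟨fun x => ⟨Classical.choose (step x.1 x.2), (Classical.choose_spec (step x.1 x.2)).2⟩,
     fun x => (Classical.choose_spec (step x.1 x.2)).1⟩
  set g : ℕ → {a : C // ¬ Acc r a} := fun n => next^[n] ⟨a0, ha0⟩ with hg
  refine hsg ⟨fun n => (g n).1, fun n => ?_⟩
  show Tr (g n).1 Act.tau (g (n + 1)).1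
  have heq : g (n + 1) = next (g n) := Function.iterate_succ_apply' next n _
  rw [heq]
  exact hnext (g n)

lemma stable_path_eq {M N : C} (h : TauPath Tr M N) (hs : Stable Tr M) : N = M := by
  rcases Relation.ReflTransGen.cases_head h with rfl | ⟨c, hc, _⟩
  · rfl
  · exact absurd ⟨c, hc⟩ hs

/-- If `P` is stable and bisimilar to `M`, then `M` can reach a stable state
still bisimilar to `P`. -/
lemma stable_transfer (hsg : StronglyGuarded Tr) {P M : C}
    (h : Bis Tr P M) (hs : Stable Tr P) :
    ∃ M1, TauPath Tr M M1 ∧ Bis Tr P M1 ∧ Stable Tr M1 := by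
  revert h
  induction M using (wf_tau hsg).induction with
  | _ M ih =>
    intro h
    by_cases hM : Stable Tr M
    · exact ⟨M, Relation.ReflTransGen.refl, h, hM⟩
    · rw [Stable, not_not] at hM
      obtain ⟨M', hM'⟩ := hM
      obtain ⟨Q1, Q2, h1, h2, _, h4⟩ := master.c1a (bis_symm h) (by simp) hM'
      have hQ1 : Q1 = P := stable_path_eq h1 hs
      rw [hQ1] at h2
      have hPM' : Bis Tr P M' := by
        rcases h2 with ⟨_, hpq⟩ | h2
        · rw [hpq]; exact bis_symm h4
        · exact absurd ⟨Q2, h2⟩ hs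
      obtain ⟨M1, hp, hb, hst⟩ := ih M' hM' hPM'
      exact ⟨M1, Relation.ReflTransGen.head hM' hp, hb, hst⟩

lemma idle_transfer (hsg : StronglyGuarded Tr) {P M : C} {X : Set A}
    (h : Bis Tr P M) (hid : Idle Tr P X) :
    ∃ M1, TauPath Tr M M1 ∧ Bis Tr P M1 ∧ Idle Tr M1 X := by
  obtain ⟨M1, hp, hb, hst⟩ := stable_transfer hsg h hid.1
  refine ⟨M1, hp, hb, hst, ?_⟩
  rintro a ha ⟨M', hM'⟩
  obtain ⟨Q1, Q2, h1, h2, _, _⟩ := master.c1a (bis_symm hb) (by simp) hM'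
  have hQ1 : Q1 = P := stable_path_eq h1 hid.1
  subst hQ1
  rcases h2 with ⟨h2, _⟩ | h2
  · exact nomatch h2
  · exact hid.2 a ha ⟨Q2, h2⟩

lemma bis_trans (hsg : StronglyGuarded Tr) {P Q R : C}
    (h1 : Bis Tr P Q) (h2 : Bis Tr Q R) : Bis Tr P R := by
  refine ⟨fun P Q => ∃ M, Bis Tr P M ∧ Bis Tr M Q,
    fun P X Q => ∃ M, BisX Tr P X M ∧ BisX Tr M X Q, ?_, Q, h1, h2⟩
  constructor
  · rintro P Q ⟨M, ha, hb⟩; exact ⟨M, bis_symm hb, bis_symm ha⟩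
  · rintro P X Q ⟨M, ha, hb⟩
    exact ⟨M, master.symm_t hb, master.symm_t ha⟩
  · rintro P Q α P' ⟨M, ha, hb⟩ hα hstep
    obtain ⟨M1, M2, hm1, hm2, hm3, hm4⟩ := master.c1a ha hα hstep
    obtain ⟨Qa, hQa, hba⟩ := tauPath_sim hb hm1
    rcases hm2 with ⟨hτ, rfl⟩ | hm2
    · exact ⟨Qa, Qa, hQa, Or.inl ⟨hτ, rfl⟩, ⟨M1, hm3, hba⟩, ⟨M1, hm4, hba⟩⟩
    · obtain ⟨Qb, Qc, k1, k2, k3, k4⟩ := master.c1a hba hα hm2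
      exact ⟨Qb, Qc, hQa.trans k1, k2, ⟨M1, hm3, k3⟩, ⟨M2, hm4, k4⟩⟩
  · rintro P Q Y ⟨M, ha, hb⟩
    exact ⟨M, master.c1b Y ha, master.c1b Y hb⟩
  · rintro P X Q P' ⟨M, ha, hb⟩ hstep
    obtain ⟨M1, M2, hm1, hm2, hm3, hm4⟩ := master.c2a ha hstep
    obtain ⟨Qa, hQa, hba⟩ := tauPath_simX hb hm1
    rcases hm2 with ⟨hτ, rfl⟩ | hm2
    · exact ⟨Qa, Qa, hQa, Or.inl ⟨rfl, rfl⟩, ⟨M1, hm3, hba⟩, ⟨M1, hm4, hba⟩⟩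
    · obtain ⟨Qb, Qc, k1, k2, k3, k4⟩ := master.c2a hba hm2
      exact ⟨Qb, Qc, hQa.trans k1, k2, ⟨M1, hm3, k3⟩, ⟨M2, hm4, k4⟩⟩
  · rintro P X Q a P' ⟨M, ha, hb⟩ haX hstep
    obtain ⟨M1, M2, hm1, hm2, hm3, hm4⟩ := master.c2b ha haX hstep
    obtain ⟨Qa, hQa, hba⟩ := tauPath_simX hb hm1
    obtain ⟨Qb, Qc, k1, k2, k3, k4⟩ := master.c2b hba haX hm2
    exact ⟨Qb, Qc, hQa.trans k1, k2, ⟨M1, hm3, k3⟩, ⟨M2, hm4, k4⟩⟩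
  · rintro P X Q ⟨M, ha, hb⟩ hid
    obtain ⟨M0, hm0, hbm0⟩ := master.c2c ha hid
    obtain ⟨M1, hm1, hbm1, hid1⟩ := idle_transfer hsg hbm0 hid
    obtain ⟨Qa, hQa, hba⟩ := tauPath_simX hb (hm0.trans hm1)
    obtain ⟨Q0, k1, k2⟩ := master.c2c hba hid1
    exact ⟨Q0, hQa.trans k1, ⟨M1, hbm1, k2⟩⟩
  · rintro P X Q P' ⟨M, ha, hb⟩ hid hstep
    obtain ⟨M0, hm0, hbm0⟩ := master.c2c ha hid
    obtain ⟨M1, hm1, hbm1, hid1⟩ := idle_transfer hsg hbm0 hid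
    obtain ⟨Ma, Mb, j1, j2, j3⟩ := master.c2d (master.c1b X hbm1) hid hstep
    have hMa : Ma = M1 := stable_path_eq j1 hid1.1
    subst hMa
    obtain ⟨Qa, hQa, hba⟩ := tauPath_simX hb (hm0.trans hm1)
    obtain ⟨Qc, Qd, k1, k2, k3⟩ := master.c2d hba hid1 j2
    exact ⟨Qc, Qd, hQa.trans k1, k2, ⟨Mb, j3, k3⟩⟩
  · rintro P X Q ⟨M, ha, hb⟩ hs
    obtain ⟨M0, hm0, hst⟩ := master.c2e ha hs
    -- need BisX M X Q to follow path, then c2e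
    obtain ⟨Qa, hQa, hba⟩ := tauPath_simX hb hm0
    obtain ⟨Q0, k1, k2⟩ := master.c2e (master.symm_t (master.symm_t hba)) hst
    exact ⟨Q0, hQa.trans k1, k2⟩

lemma cls_eq (hsg : StronglyGuarded Tr) {P Q : C} (h : Bis Tr P Q) :
    cls Tr P = cls Tr Q := by
  ext M
  exact ⟨fun hm => bis_trans hsg (bis_symm h) hm, fun hm => bis_trans hsg h hm⟩

end Helpers

/-- Transition relations between equivalence-class states: for `α ∈ A ∪ {tau}`,
`[P] -α-> R'` iff there is a path `P ==> P1 -α-> P2` with `P1 ∈ [P]`, `P2 ∈ R'` and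
(`α ∈ A` or `[P] ≠ R'`); and `[P]` has no tau-transition iff there is a path `P ==> P0`
with `P0 ∈ [P]` and `P0` having no tau-transition. -/
theorem stmt17 {C A : Type} (Tr : C → Act A → C → Prop) (χ : Set C → C)
    (hsg : StronglyGuarded Tr)
    (hχ : ∀ R : Set C, IsClass Tr R → χ R ∈ R)
    (P : C) :
    (∀ (α : Act A) (R' : Set C), α ≠ Act.to → IsClass Tr R' →
      (ClTr Tr χ (cls Tr P) α R' ↔
        ∃ P1 P2, TauPath Tr P P1 ∧ Tr P1 α P2 ∧ P1 ∈ cls Tr P ∧ P2 ∈ R' ∧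
          ((∃ a, α = Act.vis a) ∨ cls Tr P ≠ R'))) ∧
    ((¬ ∃ R' : Set C, IsClass Tr R' ∧ ClTr Tr χ (cls Tr P) Act.tau R') ↔
      ∃ P0, TauPath Tr P P0 ∧ P0 ∈ cls Tr P ∧ Stable Tr P0) := by
  have hχP : Bis Tr P (χ (cls Tr P)) := hχ (cls Tr P) ⟨P, rfl⟩
  -- transfer lemma: a path+step configuration can be moved between
  -- bisimilar starting points
  have key : ∀ (S : C) (α : Act A) (R' : Set C), Bis Tr P S → α ≠ Act.to → IsClass Tr R' →
      (∃ P1 P2, TauPath Tr S P1 ∧ Tr P1 α P2 ∧ P1 ∈ cls Tr P ∧ P2 ∈ R' ∧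
        ((∃ a, α = Act.vis a) ∨ cls Tr P ≠ R')) →
      ∀ T : C, Bis Tr P T →
      (∃ P1 P2, TauPath Tr T P1 ∧ Tr P1 α P2 ∧ P1 ∈ cls Tr P ∧ P2 ∈ R' ∧
        ((∃ a, α = Act.vis a) ∨ cls Tr P ≠ R')) := by
    rintro S α R' hS hα ⟨W, rfl⟩ ⟨P1, P2, hp, hstep, h1, h2, hside⟩ T hT
    have hST : Bis Tr S T := bis_trans hsg (bis_symm hS) hT
    obtain ⟨Q1, hQ1, hb1⟩ := tauPath_sim hST hp
    obtain ⟨Qa, Qb, k1, k2, k3, k4⟩ := master.c1a hb1 hα hstep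
    have hQa : Bis Tr P Qa := bis_trans hsg h1 k3
    rcases k2 with ⟨hτ, rfl⟩ | k2
    · -- identity: contradiction with side condition
      exfalso
      subst hτ
      rcases hside with ⟨a, ha⟩ | hne
      · exact nomatch ha
      · apply hne
        have hPP2 : Bis Tr P P2 := bis_trans hsg (bis_trans hsg h1 k3) (bis_symm k4)
        have : cls Tr P = cls Tr P2 := cls_eq hsg hPP2
        have : cls Tr W = cls Tr P2 := cls_eq hsg h2
        rw [cls_eq hsg hPP2, this]
    · refine ⟨Qa, Qb, hQ1.trans k1, k2, hQa, ?_, hside⟩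
      exact bis_trans hsg h2 k4
  constructor
  · intro α R' hα hR'
    constructor
    · intro h
      have h' : ∃ P1 P2, TauPath Tr (χ (cls Tr P)) P1 ∧ Tr P1 α P2 ∧ P1 ∈ cls Tr P ∧
          P2 ∈ R' ∧ ((∃ a, α = Act.vis a) ∨ cls Tr P ≠ R') := by
        cases α
        · exact h
        · exact h
        · exact absurd rfl hα
      exact key _ α R' hχP hα hR' h' P (bis_refl P)
    · intro h
      have h' := key P α R' (bis_refl P) hα hR' h (χ (cls Tr P)) hχP
      cases α
      · exact h'
      · exact h'
      · exact absurd rfl hα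
  · constructor
    · intro hno
      -- find a stable state in the class reachable from χ(cls P), by WF induction
      have main : ∀ Q : C, Bis Tr P Q → TauPath Tr (χ (cls Tr P)) Q →
          ∃ Q', TauPath Tr (χ (cls Tr P)) Q' ∧ Bis Tr P Q' ∧ Stable Tr Q' := by
        intro Q
        induction Q using (wf_tau hsg).induction with
        | _ Q ih =>
          intro hQ hpath
          by_cases hs : Stable Tr Q
          · exact ⟨Q, hpath, hQ, hs⟩
          · rw [Stable, not_not] at hs
            obtain ⟨Q', hQ'⟩ := hs
            by_cases hmem : Bis Tr P Q'
            · exact ih Q' hQ' hmem (hpath.tail hQ')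
            · exfalso
              apply hno
              refine ⟨cls Tr Q', ⟨Q', rfl⟩, Q, Q', hpath, hQ', hQ, bis_refl Q', Or.inr ?_⟩
              intro heq
              apply hmem
              show Q' ∈ cls Tr P
              rw [heq]
              exact bis_refl Q'
      obtain ⟨Q', _, hbQ', hsQ'⟩ := main (χ (cls Tr P)) hχP Relation.ReflTransGen.refl
      -- now pull back to P via stable_transfer applied with the stable Q'
      obtain ⟨P0, hp0, hb0, hs0⟩ := stable_transfer hsg (bis_symm hbQ') hsQ'
      exact ⟨P0, hp0, bis_trans hsg hbQ' hb0, hs0⟩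
    · rintro ⟨P0, hp0, hmem, hst⟩ ⟨R', hR', hct⟩
      obtain ⟨P1, P2, hp, hstep, h1, h2, hside⟩ := hct
      have hside' : cls Tr P ≠ R' := by
        rcases hside with ⟨a, ha⟩ | h
        · exact nomatch ha
        · exact h
      -- P1 ∈ cls P, P0 ∈ cls P stable; simulate P1 -tau-> P2 from P0
      have h10 : Bis Tr P1 P0 := bis_trans hsg (bis_symm h1) hmem
      obtain ⟨Q1, Q2, k1, k2, _, k4⟩ := master.c1a h10 (by simp) hstep
      have hQ1 : Q1 = P0 := stable_path_eq k1 hst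
      rw [hQ1] at k2
      have hP2P0 : Bis Tr P0 P2 := by
        rcases k2 with ⟨_, hpq⟩ | k2
        · rw [hpq]; exact bis_symm k4
        · exact absurd ⟨Q2, k2⟩ hst
      -- Bis P2 P0, so P2 ∈ cls P, so cls P = R'
      have hPP2 : Bis Tr P P2 := bis_trans hsg hmem hP2P0
      apply hside'
      obtain ⟨W, rfl⟩ := hR'
      rw [cls_eq hsg hPP2, cls_eq hsg h2]
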